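/- Under Assumption (A), fix θ ∈ ℝ^d and define A_1 = {(x_1,…,x_n) ∈ (ℝ^d)^n : ‖θ̂(x_1,…,x_n) − θ‖ ≤ m/(12L)} and A_2 = {(x_1,…,x_n) : ‖n^{-1}Σ_{j=1}^n V''(x_j − θ) − 𝓘‖ ≤ m/4} (operator norm), and A = A_1 ∩ A_2. Then the map A ∋ (x_1,…,x_n) ↦ θ̂(x_1,…,x_n) is Lipschitz with constant 4M/(m√n): for all (x_1,…,x_n), (x̃_1,…,x̃_n) ∈ A, ‖θ̂(x_1,…,x_n) − θ̂(x̃_1,…,x̃_n)‖ ≤ (4M/(m√n))·(Σ_{j=1}^n ‖x_j − x̃_j‖²)^{1/2}. -/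

import Mathlib

open MeasureTheory Real
open scoped RealInnerProductSpace BigOperators ENNReal NNReal

noncomputable section

abbrev Euc (d : ℕ) : Type := EuclideanSpace ℝ (Fin d)

/-- The noise distribution with density `e^{-V(x)}` w.r.t. Lebesgue measure. -/
def noiseMeasure {d : ℕ} (V : Euc d → ℝ) : Measure (Euc d) :=
  MeasureTheory.volume.withDensity fun x => ENNReal.ofReal (Real.exp (-(V x)))

/-- The joint distribution of an i.i.d. sample `X_1, …, X_n` from `P_θ(dx) = e^{-V(x-θ)}dx`. -/
def sampleMeasure {d : ℕ} (V : Euc d → ℝ) (n : ℕ) (θ : Euc d) : Measure (Fin n → Euc d) :=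
  Measure.pi fun _ => (noiseMeasure V).map (fun x => θ + x)

/-- `ψ_α`-norm of a random variable: `sup_{p ≥ 1} p^{-1/α} (E|η|^p)^{1/p}`. -/
def psiNorm {Ω : Type*} [MeasurableSpace Ω] (α : ℝ) (μ : Measure Ω) (η : Ω → ℝ) : ℝ :=
  ⨆ p : {p : ℝ // 1 ≤ p}, (p : ℝ) ^ (-(1 / α)) * (∫ ω, |η ω| ^ (p : ℝ) ∂μ) ^ ((1 : ℝ) / (p : ℝ))

/-- `f` belongs to the Hölder ball of radius `B` in `C^s`, `s = l + ρ`. -/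
def holderCLe {d : ℕ} (l : ℕ) (ρ : ℝ) (f : Euc d → ℝ) (B : ℝ) : Prop :=
  ContDiff ℝ l f ∧
  (∀ j : ℕ, j ≤ l → ∀ x, ‖iteratedFDeriv ℝ j f x‖ ≤ B) ∧
  (∀ x y, ‖iteratedFDeriv ℝ l f x - iteratedFDeriv ℝ l f y‖ ≤ B * ‖x - y‖ ^ ρ)

/-- The operator `(T g)(θ) = E_θ g(θ̂)`. -/
def Texp {d : ℕ} (V : Euc d → ℝ) (n : ℕ) (hatθ : (Fin n → Euc d) → Euc d) (g : Euc d → ℝ) :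
    Euc d → ℝ :=
  fun θ => ∫ x, g (hatθ x) ∂ sampleMeasure V n θ

/-- The operator `𝓑 = 𝓣 - Id`. -/
def Bop {d : ℕ} (V : Euc d → ℝ) (n : ℕ) (hatθ : (Fin n → Euc d) → Euc d) :
    (Euc d → ℝ) → Euc d → ℝ :=
  fun g θ => Texp V n hatθ g θ - g θ

/-- The bias-corrected functional `f_k = Σ_{j=0}^k (-1)^j 𝓑^j f`. -/
def biasCorrect {d : ℕ} (V : Euc d → ℝ) (n : ℕ) (hatθ : (Fin n → Euc d) → Euc d) (k : ℕ)
    (f : Euc d → ℝ) : Euc d → ℝ :=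
  fun θ => ∑ j ∈ Finset.range (k + 1), (-1 : ℝ) ^ j * (Bop V n hatθ)^[j] f θ

/-- The Poincaré constant `c(V)` of the distribution `e^{-V(x)}dx`. -/
def poincareConst {d : ℕ} (V : Euc d → ℝ) : ℝ :=
  sInf {C : ℝ | 0 ≤ C ∧ ∀ g : Euc d → ℝ, LocallyLipschitz g →
    ∫ x, (g x - ∫ y, g y ∂ noiseMeasure V) ^ 2 ∂ noiseMeasure V ≤
      C * ∫ x, ‖gradient g x‖ ^ 2 ∂ noiseMeasure V}



section AuxLip

variable {d : ℕ}

/-- The Hessian bilinear map agrees with the second iterated derivative. -/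
lemma aux_hess_apply (V : Euc d → ℝ) (p u v : Euc d) :
    fderiv ℝ (fderiv ℝ V) p u v = iteratedFDeriv ℝ 2 V p ![u, v] := by
  rw [iteratedFDeriv_two_apply]
  simp

lemma aux_opNorm {M : ℝ} (hM : 0 ≤ M) (V : Euc d → ℝ) (p : Euc d)
    (h : ‖iteratedFDeriv ℝ 2 V p‖ ≤ M) : ‖fderiv ℝ (fderiv ℝ V) p‖ ≤ M := by
  refine ContinuousLinearMap.opNorm_le_bound _ hM (fun u => ?_)
  refine ContinuousLinearMap.opNorm_le_bound _ (by positivity) (fun v => ?_)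
  rw [aux_hess_apply]
  calc ‖iteratedFDeriv ℝ 2 V p ![u, v]‖
      ≤ ‖iteratedFDeriv ℝ 2 V p‖ * ∏ i, ‖(![u, v]) i‖ :=
        (iteratedFDeriv ℝ 2 V p).le_opNorm _
    _ ≤ M * (‖u‖ * ‖v‖) := by
        rw [Fin.prod_univ_two]
        simp only [Matrix.cons_val_zero, Matrix.cons_val_one, Matrix.head_cons]
        exact mul_le_mul_of_nonneg_right h (by positivity)
    _ = M * ‖u‖ * ‖v‖ := by ring

lemma aux_hess_lip {L : ℝ} (V : Euc d → ℝ)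
    (hLip : ∀ x y, ‖iteratedFDeriv ℝ 2 V x - iteratedFDeriv ℝ 2 V y‖ ≤ L * ‖x - y‖)
    (p q u : Euc d) :
    |fderiv ℝ (fderiv ℝ V) p u u - fderiv ℝ (fderiv ℝ V) q u u| ≤ L * ‖p - q‖ * ‖u‖ ^ 2 := by
  rw [aux_hess_apply, aux_hess_apply]
  have h1 : iteratedFDeriv ℝ 2 V p ![u, u] - iteratedFDeriv ℝ 2 V q ![u, u]
      = (iteratedFDeriv ℝ 2 V p - iteratedFDeriv ℝ 2 V q) ![u, u] := by
    simp [ContinuousMultilinearMap.sub_apply]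
  rw [h1, ← Real.norm_eq_abs]
  calc ‖(iteratedFDeriv ℝ 2 V p - iteratedFDeriv ℝ 2 V q) ![u, u]‖
      ≤ ‖iteratedFDeriv ℝ 2 V p - iteratedFDeriv ℝ 2 V q‖ * ∏ i, ‖(![u, u]) i‖ :=
        ContinuousMultilinearMap.le_opNorm _ _
    _ ≤ L * ‖p - q‖ * ‖u‖ ^ 2 := by
        rw [Fin.prod_univ_two]
        simp only [Matrix.cons_val_zero, Matrix.cons_val_one, Matrix.head_cons]
        have h2 : (0:ℝ) ≤ ‖u‖ * ‖u‖ := by positivity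
        calc ‖iteratedFDeriv ℝ 2 V p - iteratedFDeriv ℝ 2 V q‖ * (‖u‖ * ‖u‖)
            ≤ (L * ‖p - q‖) * (‖u‖ * ‖u‖) :=
              mul_le_mul_of_nonneg_right (hLip p q) h2
          _ = L * ‖p - q‖ * ‖u‖ ^ 2 := by ring

/-- First-order condition for the MLE. -/
lemma aux_foc {n : ℕ} (V : Euc d → ℝ) (hV : ContDiff ℝ 2 V)
    (x : Fin n → Euc d) (a : Euc d)
    (hmin : ∀ θ' : Euc d, ∑ j, V (x j - a) ≤ ∑ j, V (x j - θ')) (v : Euc d) :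
    ∑ j, fderiv ℝ V (x j - a) v = 0 := by
  have hVd : Differentiable ℝ V := hV.differentiable two_ne_zero
  have hterm : ∀ j : Fin n, HasFDerivAt (fun θ' : Euc d => V (x j - θ'))
      ((fderiv ℝ V (x j - a)).comp (-(ContinuousLinearMap.id ℝ (Euc d)))) a := by
    intro j
    have h1 : HasFDerivAt (fun θ' : Euc d => x j - θ')
        (-(ContinuousLinearMap.id ℝ (Euc d))) a := by
      exact ((hasFDerivAt_const (𝕜 := ℝ) (x j) a).sub (hasFDerivAt_id (𝕜 := ℝ) a)).congr_fderiv (zero_sub _)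
    exact (hVd (x j - a)).hasFDerivAt.comp a h1
  have hsum : HasFDerivAt (fun θ' : Euc d => ∑ j, V (x j - θ'))
      (∑ j, (fderiv ℝ V (x j - a)).comp (-(ContinuousLinearMap.id ℝ (Euc d)))) a :=
    HasFDerivAt.fun_sum (fun j _ => hterm j)
  have hloc : IsLocalMin (fun θ' : Euc d => ∑ j, V (x j - θ')) a :=
    Filter.Eventually.of_forall hmin
  have hzero := hloc.hasFDerivAt_eq_zero hsum
  have h0 : (∑ j, (fderiv ℝ V (x j - a)).comp
      (-(ContinuousLinearMap.id ℝ (Euc d)))) (-v) = 0 := by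
    rw [hzero]; rfl
  simpa [ContinuousLinearMap.sum_apply] using h0

/-- The gradient of `V` is `M`-Lipschitz. -/
lemma aux_grad_lip {M : ℝ} (hM : 0 ≤ M) (V : Euc d → ℝ) (hV : ContDiff ℝ 2 V)
    (hbound : ∀ p, ‖iteratedFDeriv ℝ 2 V p‖ ≤ M) (y z : Euc d) :
    ‖fderiv ℝ V y - fderiv ℝ V z‖ ≤ M * ‖y - z‖ := by
  have hgd : Differentiable ℝ (fderiv ℝ V) :=
    (hV.fderiv_right (m := 1) (by norm_num)).differentiable one_ne_zero
  exact convex_univ.norm_image_sub_le_of_norm_fderiv_le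
    (fun p _ => hgd p) (fun p _ => aux_opNorm hM V p (hbound p))
    (Set.mem_univ z) (Set.mem_univ y)

end AuxLip

set_option maxHeartbeats 1600000 in
/-- Proposition 4.3 / `Lip_basic`: the MLE is Lipschitz with constant
`4M/(m√n)` on the set `A = A₁ ∩ A₂`. -/
theorem stmt_14 :
    ∀ (L M m : ℝ),
      0 < L → 0 < M → 0 < m →
      ∀ (d n : ℕ) (V : Euc d → ℝ) (hatθ : (Fin n → Euc d) → Euc d),
        0 < n →
        StrictConvexOn ℝ Set.univ V →
        ContDiff ℝ 2 V →
        (∫ x, Real.exp (-(V x)) = 1) →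
        (∀ x, ‖iteratedFDeriv ℝ 2 V x‖ ≤ M) →
        (∀ x y, ‖iteratedFDeriv ℝ 2 V x - iteratedFDeriv ℝ 2 V y‖ ≤ L * ‖x - y‖) →
        -- `𝓘 = E[V''(ξ)] ⪰ m I_d`
        (∀ u : Euc d,
          m * ‖u‖ ^ 2 ≤ (∫ y, iteratedFDeriv ℝ 2 V y ∂ noiseMeasure V) ![u, u]) →
        (∀ (x : Fin n → Euc d) (θ' : Euc d),
          ∑ j, V (x j - hatθ x) ≤ ∑ j, V (x j - θ')) →
        ∀ (θ : Euc d) (x x' : Fin n → Euc d),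
          -- `x ∈ A = A₁ ∩ A₂`
          ‖hatθ x - θ‖ ≤ m / (12 * L) →
          ‖(n : ℝ)⁻¹ • ∑ j, iteratedFDeriv ℝ 2 V (x j - θ) -
              ∫ y, iteratedFDeriv ℝ 2 V y ∂ noiseMeasure V‖ ≤ m / 4 →
          -- `x' ∈ A = A₁ ∩ A₂`
          ‖hatθ x' - θ‖ ≤ m / (12 * L) →
          ‖(n : ℝ)⁻¹ • ∑ j, iteratedFDeriv ℝ 2 V (x' j - θ) -
              ∫ y, iteratedFDeriv ℝ 2 V y ∂ noiseMeasure V‖ ≤ m / 4 →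
          ‖hatθ x - hatθ x'‖ ≤
            4 * M / (m * Real.sqrt n) * Real.sqrt (∑ j, ‖x j - x' j‖ ^ 2) := by
  intro L M m hL hM hm d n V hatθ hn hconv hCD hint hMb hLb hI hmin θ x x' hA1x hA2x hA1x' hA2x'
  set g : Euc d → (Euc d →L[ℝ] ℝ) := fderiv ℝ V with hg
  set H : Euc d → (Euc d →L[ℝ] (Euc d →L[ℝ] ℝ)) := fderiv ℝ g with hH
  set a : Euc d := hatθ x with ha
  set b : Euc d := hatθ x' with hb
  set u : Euc d := a - b with hu
  set Q : ℝ := ∑ j, ‖x j - x' j‖ ^ 2 with hQ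
  have hQ0 : 0 ≤ Q := Finset.sum_nonneg fun j _ => by positivity
  have hsq0 : 0 ≤ Real.sqrt Q := Real.sqrt_nonneg _
  have hn' : (0:ℝ) < n := by exact_mod_cast hn
  have hsn : (0:ℝ) < Real.sqrt n := Real.sqrt_pos.mpr hn'
  by_cases hu0 : u = 0
  · rw [hu0, norm_zero]; positivity
  have hun : 0 < ‖u‖ := norm_pos_iff.mpr hu0
  have hgd : Differentiable ℝ g :=
    (hCD.fderiv_right (m := 1) (by norm_num)).differentiable one_ne_zero
  -- first-order conditions
  have hFOC1 : ∀ v, ∑ j, g (x j - a) v = 0 := fun v => aux_foc V hCD x a (hmin x) v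
  have hFOC2 : ∀ v, ∑ j, g (x' j - b) v = 0 := fun v => aux_foc V hCD x' b (hmin x') v
  -- Hessian sum lower bound at θ
  set T : ContinuousMultilinearMap ℝ (fun _ : Fin 2 => Euc d) ℝ :=
    ∑ j, iteratedFDeriv ℝ 2 V (x j - θ) with hT
  set I : ContinuousMultilinearMap ℝ (fun _ : Fin 2 => Euc d) ℝ :=
    ∫ y, iteratedFDeriv ℝ 2 V y ∂ noiseMeasure V with hI2
  have hTapp : T ![u, u] = ∑ j, H (x j - θ) u u := by
    rw [hT, ContinuousMultilinearMap.sum_apply]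
    exact Finset.sum_congr rfl fun j _ => (aux_hess_apply V (x j - θ) u u).symm
  have habs : |((n:ℝ)⁻¹ • T) ![u, u] - I ![u, u]| ≤ m / 4 * ‖u‖ ^ 2 := by
    have h1 : ((n:ℝ)⁻¹ • T) ![u, u] - I ![u, u] = ((n:ℝ)⁻¹ • T - I) ![u, u] := by
      simp [ContinuousMultilinearMap.sub_apply]
    rw [h1, ← Real.norm_eq_abs]
    calc ‖((n:ℝ)⁻¹ • T - I) ![u, u]‖
        ≤ ‖(n:ℝ)⁻¹ • T - I‖ * ∏ i, ‖(![u, u]) i‖ := ContinuousMultilinearMap.le_opNorm _ _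
      _ ≤ m / 4 * ‖u‖ ^ 2 := by
          rw [Fin.prod_univ_two]
          simp only [Matrix.cons_val_zero, Matrix.cons_val_one, Matrix.head_cons]
          calc ‖(n:ℝ)⁻¹ • T - I‖ * (‖u‖ * ‖u‖) ≤ m / 4 * (‖u‖ * ‖u‖) :=
                mul_le_mul_of_nonneg_right hA2x (by positivity)
            _ = m / 4 * ‖u‖ ^ 2 := by ring
  have hIu : m * ‖u‖ ^ 2 ≤ I ![u, u] := hI u
  have hsmul : ((n:ℝ)⁻¹ • T) ![u, u] = (n:ℝ)⁻¹ * T ![u, u] := by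
    simp [ContinuousMultilinearMap.smul_apply, smul_eq_mul]
  have hinv : 3 * m / 4 * ‖u‖ ^ 2 ≤ (n:ℝ)⁻¹ * T ![u, u] := by
    rw [← hsmul]
    have := abs_le.mp habs
    linarith [this.1, this.2, hIu]
  have hsumθ : (n:ℝ) * (3 * m / 4 * ‖u‖ ^ 2) ≤ ∑ j, H (x j - θ) u u := by
    rw [← hTapp]
    have h2 : (n:ℝ) * ((n:ℝ)⁻¹ * T ![u, u]) = T ![u, u] := by
      field_simp
    calc (n:ℝ) * (3 * m / 4 * ‖u‖ ^ 2) ≤ (n:ℝ) * ((n:ℝ)⁻¹ * T ![u, u]) :=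
          mul_le_mul_of_nonneg_left hinv hn'.le
      _ = T ![u, u] := h2
  -- Hessian sum lower bound along the segment
  have hwθ : ∀ t ∈ Set.Icc (0:ℝ) 1, ‖θ - (b + t • u)‖ ≤ m / (12 * L) := by
    intro t ht
    have hw : b + t • u - θ = (1 - t) • (b - θ) + t • (a - θ) := by
      rw [hu]; module
    rw [norm_sub_rev, hw]
    calc ‖(1 - t) • (b - θ) + t • (a - θ)‖
        ≤ ‖(1 - t) • (b - θ)‖ + ‖t • (a - θ)‖ := norm_add_le _ _
      _ = (1 - t) * ‖b - θ‖ + t * ‖a - θ‖ := by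
          rw [norm_smul, norm_smul, Real.norm_eq_abs, Real.norm_eq_abs,
            abs_of_nonneg (by linarith [ht.2]), abs_of_nonneg ht.1]
      _ ≤ (1 - t) * (m / (12 * L)) + t * (m / (12 * L)) := by
          have h1 : (0:ℝ) ≤ 1 - t := by linarith [ht.2]
          exact add_le_add (mul_le_mul_of_nonneg_left hA1x' h1)
            (mul_le_mul_of_nonneg_left hA1x ht.1)
      _ = m / (12 * L) := by ring
  have hS : ∀ t ∈ Set.Icc (0:ℝ) 1,
      (n:ℝ) * (m / 2 * ‖u‖ ^ 2) ≤ ∑ j, H (x j - b - t • u) u u := by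
    intro t ht
    have hj : ∀ j : Fin n, H (x j - θ) u u - m / 12 * ‖u‖ ^ 2 ≤ H (x j - b - t • u) u u := by
      intro j
      have hlip := aux_hess_lip V hLb (x j - b - t • u) (x j - θ) u
      have hd : (x j - b - t • u) - (x j - θ) = θ - (b + t • u) := by abel
      rw [hd] at hlip
      have hLw : L * ‖θ - (b + t • u)‖ ≤ m / 12 := by
        have h1 := hwθ t ht
        have h2 : L * ‖θ - (b + t • u)‖ ≤ L * (m / (12 * L)) :=
          mul_le_mul_of_nonneg_left h1 hL.le
        have h3 : L * (m / (12 * L)) = m / 12 := by field_simp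
        linarith
      have h4 : L * ‖θ - (b + t • u)‖ * ‖u‖ ^ 2 ≤ m / 12 * ‖u‖ ^ 2 :=
        mul_le_mul_of_nonneg_right hLw (by positivity)
      have h5 := abs_le.mp hlip
      linarith [h5.1, h5.2]
    have hsum := Finset.sum_le_sum fun j (_ : j ∈ Finset.univ) => hj j
    rw [Finset.sum_sub_distrib, Finset.sum_const, Finset.card_univ, Fintype.card_fin,
      nsmul_eq_mul] at hsum
    have hextra : (0:ℝ) ≤ (n:ℝ) * m * ‖u‖ ^ 2 :=
      mul_nonneg (mul_nonneg hn'.le hm.le) (sq_nonneg ‖u‖)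
    linarith [hsum, hsumθ, hextra]
  -- the function φ and its derivative
  set c : ℝ := (n:ℝ) * (m / 2 * ‖u‖ ^ 2) with hc
  set φ : ℝ → ℝ := fun t => ∑ j, g (x j - b - t • u) u with hφ
  have hφ' : ∀ t : ℝ, HasDerivAt φ (∑ j, H (x j - b - t • u) (-u) u) t := by
    intro t
    apply HasDerivAt.fun_sum
    intro j _
    have hγ : HasDerivAt (fun t : ℝ => x j - b - t • u) (-u) t := by
      simpa using ((hasDerivAt_id t).smul_const u).const_sub (x j - b)
    have hgder : HasFDerivAt g (H (x j - b - t • u)) (x j - b - t • u) :=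
      (hgd (x j - b - t • u)).hasFDerivAt
    have h1 : HasDerivAt (fun t : ℝ => g (x j - b - t • u))
        (H (x j - b - t • u) (-u)) t := hgder.comp_hasDerivAt t hγ
    have h2 := (ContinuousLinearMap.apply ℝ ℝ u).hasFDerivAt.comp_hasDerivAt t h1
    simpa [Function.comp_def] using h2
  set ψ : ℝ → ℝ := fun t => φ t + c * t with hψ
  have hψ' : ∀ t : ℝ, HasDerivAt ψ (∑ j, H (x j - b - t • u) (-u) u + c) t := by
    intro t
    have h := (hφ' t).fun_add ((hasDerivAt_id t).const_mul c)
    simpa using h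
  have hanti : AntitoneOn ψ (Set.Icc 0 1) := by
    apply antitoneOn_of_deriv_nonpos (convex_Icc 0 1)
    · exact fun t _ => ((hψ' t).differentiableAt).continuousAt.continuousWithinAt
    · rw [interior_Icc]
      exact fun t _ => ((hψ' t).differentiableAt).differentiableWithinAt
    · rw [interior_Icc]
      intro t ht
      rw [(hψ' t).deriv]
      have hs := hS t (Set.mem_Icc_of_Ioo ht)
      have hneg : ∑ j, H (x j - b - t • u) (-u) u = -∑ j, H (x j - b - t • u) u u := by
        rw [← Finset.sum_neg_distrib]
        exact Finset.sum_congr rfl fun j _ => by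
          rw [map_neg, ContinuousLinearMap.neg_apply]
      rw [hneg]
      linarith
  have hkey0 : ψ 1 ≤ ψ 0 :=
    hanti (Set.mem_Icc.mpr ⟨le_refl 0, zero_le_one⟩)
      (Set.mem_Icc.mpr ⟨zero_le_one, le_refl 1⟩) zero_le_one
  have hφ1 : φ 1 = 0 := by
    rw [hφ]
    have heq : ∀ j : Fin n, x j - b - (1:ℝ) • u = x j - a := by
      intro j; rw [one_smul, hu]; abel
    simp only [heq]
    exact hFOC1 u
  have hφ0 : φ 0 = ∑ j, g (x j - b) u := by
    rw [hφ]; simp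
  have hcφ : c ≤ ∑ j, g (x j - b) u := by
    have h1 : ψ 1 = c := by rw [hψ]; simp [hφ1]
    have h2 : ψ 0 = φ 0 := by rw [hψ]; simp
    rw [h1, h2, hφ0] at hkey0
    exact hkey0
  -- perturbation bound
  have hpert : ∑ j, g (x j - b) u ≤ M * ‖u‖ * ∑ j, ‖x j - x' j‖ := by
    have h1 : ∑ j, g (x j - b) u = ∑ j, (g (x j - b) u - g (x' j - b) u) := by
      rw [Finset.sum_sub_distrib, hFOC2 u, sub_zero]
    rw [h1]
    have h2 : ∀ j : Fin n, g (x j - b) u - g (x' j - b) u ≤ M * ‖u‖ * ‖x j - x' j‖ := by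
      intro j
      have h3 : g (x j - b) u - g (x' j - b) u = (g (x j - b) - g (x' j - b)) u := by
        simp [ContinuousLinearMap.sub_apply]
      rw [h3]
      calc (g (x j - b) - g (x' j - b)) u ≤ ‖(g (x j - b) - g (x' j - b)) u‖ :=
            le_abs_self _
        _ ≤ ‖g (x j - b) - g (x' j - b)‖ * ‖u‖ := ContinuousLinearMap.le_opNorm _ _
        _ ≤ (M * ‖(x j - b) - (x' j - b)‖) * ‖u‖ :=
            mul_le_mul_of_nonneg_right (aux_grad_lip hM.le V hCD hMb _ _) (norm_nonneg _)
        _ = M * ‖u‖ * ‖x j - x' j‖ := by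
            rw [show (x j - b) - (x' j - b) = x j - x' j by abel]; ring
    calc ∑ j, (g (x j - b) u - g (x' j - b) u) ≤ ∑ j, M * ‖u‖ * ‖x j - x' j‖ :=
          Finset.sum_le_sum fun j _ => h2 j
      _ = M * ‖u‖ * ∑ j, ‖x j - x' j‖ := by rw [← Finset.mul_sum]
  -- Cauchy-Schwarz
  have hCS : ∑ j, ‖x j - x' j‖ ≤ Real.sqrt n * Real.sqrt Q := by
    have h1 : (∑ j, ‖x j - x' j‖) ^ 2 ≤ (n:ℝ) * Q := by
      have := sq_sum_le_card_mul_sum_sq (s := (Finset.univ : Finset (Fin n)))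
        (f := fun j => ‖x j - x' j‖)
      simpa [hQ] using this
    have h2 : (0:ℝ) ≤ ∑ j, ‖x j - x' j‖ := Finset.sum_nonneg fun j _ => norm_nonneg _
    calc ∑ j, ‖x j - x' j‖ = Real.sqrt ((∑ j, ‖x j - x' j‖) ^ 2) :=
          (Real.sqrt_sq h2).symm
      _ ≤ Real.sqrt ((n:ℝ) * Q) := Real.sqrt_le_sqrt h1
      _ = Real.sqrt n * Real.sqrt Q := Real.sqrt_mul hn'.le Q
  -- combine
  have hfinal : c ≤ M * ‖u‖ * (Real.sqrt n * Real.sqrt Q) := by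
    calc c ≤ ∑ j, g (x j - b) u := hcφ
      _ ≤ M * ‖u‖ * ∑ j, ‖x j - x' j‖ := hpert
      _ ≤ M * ‖u‖ * (Real.sqrt n * Real.sqrt Q) :=
          mul_le_mul_of_nonneg_left hCS (by positivity)
  rw [div_mul_eq_mul_div, le_div_iff₀ (by positivity : (0:ℝ) < m * Real.sqrt n)]
  have hs2 : Real.sqrt n * Real.sqrt n = (n:ℝ) := Real.mul_self_sqrt hn'.le
  rw [hc] at hfinal
  have e1 : (Real.sqrt n * ‖u‖) * (Real.sqrt n * (m / 2) * ‖u‖)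
      = (n:ℝ) * (m / 2 * ‖u‖ ^ 2) := by
    calc (Real.sqrt n * ‖u‖) * (Real.sqrt n * (m / 2) * ‖u‖)
        = (Real.sqrt n * Real.sqrt n) * (m / 2 * ‖u‖ ^ 2) := by ring
      _ = (n:ℝ) * (m / 2 * ‖u‖ ^ 2) := by rw [hs2]
  have e2 : (Real.sqrt n * ‖u‖) * (M * Real.sqrt Q) = M * ‖u‖ * (Real.sqrt n * Real.sqrt Q) := by
    ring
  have h6 : (Real.sqrt n * ‖u‖) * (Real.sqrt n * (m / 2) * ‖u‖)
      ≤ (Real.sqrt n * ‖u‖) * (M * Real.sqrt Q) := by rw [e1, e2]; exact hfinal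
  have h7 : Real.sqrt n * (m / 2) * ‖u‖ ≤ M * Real.sqrt Q :=
    le_of_mul_le_mul_left h6 (mul_pos hsn hun)
  have h8 : (0:ℝ) ≤ M * Real.sqrt Q := mul_nonneg hM.le hsq0
  linarith [h7, h8]
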